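/- Let M₀, M₁ be n×n complex matrices with M₀ᴴ·M₀ + M₁ᴴ·M₁ = I, let N₁ be an n×n matrix, and suppose there is c ∈ ℂ with |c| = 1 and M₀·N₁ = c • N₁. Then for every ℂ-linear map E on n×n complex matrices and every matrix ρ: ∑'_k M₀·((E ∘ C₁)^[k] (N₁·ρ·N₁ᴴ))·M₀ᴴ = N₁·ρ·N₁ᴴ, where C₁(τ) := M₁·τ·M₁ᴴ; in fact every term with k ≥ 1 vanishes. -/

import Mathlib

open Matrix

theorem loop_elimination {n : ℕ}
    (M₀ M₁ N₁ : Matrix (Fin n) (Fin n) ℂ)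
    (hM : M₀ᴴ * M₀ + M₁ᴴ * M₁ = 1)
    (hc : ∃ c : ℂ, ‖c‖ = 1 ∧ M₀ * N₁ = c • N₁)
    (E : Matrix (Fin n) (Fin n) ℂ →ₗ[ℂ] Matrix (Fin n) (Fin n) ℂ)
    (ρ : Matrix (Fin n) (Fin n) ℂ) :
    (∑' k : ℕ, M₀ * ((fun τ => E (M₁ * τ * M₁ᴴ))^[k] (N₁ * ρ * N₁ᴴ)) * M₀ᴴ)
        = N₁ * ρ * N₁ᴴ ∧
    ∀ k : ℕ, 1 ≤ k →
      M₀ * ((fun τ => E (M₁ * τ * M₁ᴴ))^[k] (N₁ * ρ * N₁ᴴ)) * M₀ᴴ = 0 := by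
  obtain ⟨c, habs, hMN⟩ := hc
  have hcc : star c * c = 1 := by
    rw [Complex.star_def, mul_comm, Complex.mul_conj]
    norm_cast
    rw [Complex.normSq_eq_norm_sq, habs]; norm_num
  -- M₁ * N₁ = 0
  have h1 : M₁ * N₁ = 0 := by
    have key : (M₁ * N₁)ᴴ * (M₁ * N₁) = 0 := by
      have h2 : N₁ᴴ * (M₀ᴴ * M₀ + M₁ᴴ * M₁) * N₁ = N₁ᴴ * N₁ := by
        rw [hM]; simp
      have h3 : (M₀ * N₁)ᴴ * (M₀ * N₁) = N₁ᴴ * N₁ := by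
        rw [hMN, conjTranspose_smul, smul_mul_assoc, mul_smul_comm,
          smul_smul, hcc, one_smul]
      have h4 : (M₀ * N₁)ᴴ * (M₀ * N₁) + (M₁ * N₁)ᴴ * (M₁ * N₁) = N₁ᴴ * N₁ := by
        simp only [conjTranspose_mul]
        calc N₁ᴴ * M₀ᴴ * (M₀ * N₁) + N₁ᴴ * M₁ᴴ * (M₁ * N₁)
            = N₁ᴴ * (M₀ᴴ * M₀ + M₁ᴴ * M₁) * N₁ := by noncomm_ring
          _ = N₁ᴴ * N₁ := h2
      rw [h3] at h4
      linear_combination (norm := noncomm_ring) h4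
    open ComplexOrder in exact conjTranspose_mul_self_eq_zero.mp key
  set f : Matrix (Fin n) (Fin n) ℂ → Matrix (Fin n) (Fin n) ℂ :=
    fun τ => E (M₁ * τ * M₁ᴴ) with hf
  have hf0 : f 0 = 0 := by simp [hf]
  have hfN : f (N₁ * ρ * N₁ᴴ) = 0 := by
    have : M₁ * (N₁ * ρ * N₁ᴴ) = 0 := by
      rw [show M₁ * (N₁ * ρ * N₁ᴴ) = (M₁ * N₁) * ρ * N₁ᴴ by noncomm_ring, h1]
      simp
    simp [hf, this]
  have hzero0 : ∀ m : ℕ, f^[m] 0 = 0 := by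
    intro m
    induction m with
    | zero => simp
    | succ m ih => rw [Function.iterate_succ_apply, hf0, ih]
  have hiter : ∀ k : ℕ, 1 ≤ k → f^[k] (N₁ * ρ * N₁ᴴ) = 0 := by
    intro k hk
    obtain ⟨m, rfl⟩ := Nat.exists_eq_add_of_le hk
    rw [add_comm, Function.iterate_add_apply, Function.iterate_one, hfN, hzero0]
  have hzero : ∀ k : ℕ, 1 ≤ k →
      M₀ * (f^[k] (N₁ * ρ * N₁ᴴ)) * M₀ᴴ = 0 := by
    intro k hk; rw [hiter k hk]; simp
  refine ⟨?_, hzero⟩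
  rw [tsum_eq_single 0 (fun k hk => hzero k (Nat.one_le_iff_ne_zero.mpr hk))]
  simp only [Function.iterate_zero, id_eq]
  rw [show M₀ * (N₁ * ρ * N₁ᴴ) * M₀ᴴ = (M₀ * N₁) * ρ * (M₀ * N₁)ᴴ by
    simp [conjTranspose_mul]; noncomm_ring, hMN, conjTranspose_smul,
    smul_mul_assoc, mul_smul_comm, smul_mul_assoc, smul_smul, hcc, one_smul]
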